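/- arXiv:2104.06567 — 3 statements merged into one kernel-verified Lean document; each statement's English description precedes it below -/
import Mathlib

section
/- For every compact operator T on a Hilbert space H and every n ≥ 1, the (2n)-th singular value satisfies μ(2n, T) ≤ n^{-1/2} · e(n, T), where e(n, T) = inf{‖T − R‖_HS : rank(R) ≤ n} is the n-th Hilbert–Schmidt approximation number of T. -/
open MeasureTheory ENNReal
open scoped InnerProductSpace ComplexConjugate

noncomputable section

/-- `n`-th singular value of `T`: distance in operator norm to operators of rank at most `n`. -/
def singVal {H : Type*} [NormedAddCommGroup H] [InnerProductSpace ℂ H]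
    (T : H →L[ℂ] H) (n : ℕ) : ℝ :=
  sInf {c : ℝ | ∃ R : H →L[ℂ] H,
    Module.rank ℂ (LinearMap.range (R : H →ₗ[ℂ] H)) ≤ (n : Cardinal) ∧ c = ‖T - R‖}

/-- Hilbert–Schmidt norm of `T` computed with respect to a Hilbert basis `e`. -/
def hsNorm {ι H : Type*} [NormedAddCommGroup H] [InnerProductSpace ℂ H]
    (e : HilbertBasis ι ℂ H) (T : H →L[ℂ] H) : ℝ≥0∞ :=
  (∑' i, ENNReal.ofReal (‖T (e i)‖ ^ 2)) ^ (1 / 2 : ℝ)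

/-- `n`-th Hilbert–Schmidt approximation number of `T`. -/
def hsApprox {ι H : Type*} [NormedAddCommGroup H] [InnerProductSpace ℂ H]
    (e : HilbertBasis ι ℂ H) (T : H →L[ℂ] H) (n : ℕ) : ℝ≥0∞ :=
  ⨅ R ∈ {R : H →L[ℂ] H |
      Module.rank ℂ (LinearMap.range (R : H →ₗ[ℂ] H)) ≤ (n : Cardinal)},
    hsNorm e (T - R)

section Aux

variable {H : Type*} [NormedAddCommGroup H] [InnerProductSpace ℂ H] [CompleteSpace H]
variable {ι : Type*} (e : HilbertBasis ι ℂ H)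

/-- Parseval in `ℝ≥0∞`. -/
lemma parseval_ennreal (x : H) :
    ∑' i, ENNReal.ofReal (‖(⟪e i, x⟫_ℂ)‖ ^ 2) = ENNReal.ofReal (‖x‖ ^ 2) := by
  have h1 : HasSum (fun i => ((‖(⟪e i, x⟫_ℂ)‖ ^ 2 : ℝ) : ℂ)) ((‖x‖ ^ 2 : ℝ) : ℂ) := by
    have h := e.hasSum_inner_mul_inner x x
    have hx : ⟪x, x⟫_ℂ = ((‖x‖ ^ 2 : ℝ) : ℂ) := by
      rw [inner_self_eq_norm_sq_to_K]; norm_cast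
    rw [hx] at h
    refine h.congr_fun fun i => ?_
    rw [← inner_conj_symm x (e i), RCLike.conj_mul]
    norm_cast
  have h2 : HasSum (fun i => ‖(⟪e i, x⟫_ℂ)‖ ^ 2) (‖x‖ ^ 2) := Complex.hasSum_ofReal.mp h1
  rw [← ENNReal.ofReal_tsum_of_nonneg (fun i => by positivity) h2.summable, h2.tsum_eq]


/-- Sum of `‖S f i‖²` over a finite orthonormal family is at most the HS sum of squares. -/
lemma sum_sq_le_hs {m : ℕ} (f : Fin m → H) (hf : Orthonormal ℂ f) (S : H →L[ℂ] H) :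
    ∑ i : Fin m, ENNReal.ofReal (‖S (f i)‖ ^ 2) ≤ ∑' i, ENNReal.ofReal (‖S (e i)‖ ^ 2) := by
  set A := ContinuousLinearMap.adjoint S with hA
  calc ∑ i : Fin m, ENNReal.ofReal (‖S (f i)‖ ^ 2)
      = ∑ i : Fin m, ∑' j, ENNReal.ofReal (‖(⟪e j, S (f i)⟫_ℂ)‖ ^ 2) := by
        simp_rw [parseval_ennreal e]
    _ = ∑' j, ∑ i : Fin m, ENNReal.ofReal (‖(⟪e j, S (f i)⟫_ℂ)‖ ^ 2) := by
        simp only [← tsum_fintype (L := SummationFilter.unconditional _)]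
        exact ENNReal.tsum_comm
    _ ≤ ∑' j, ENNReal.ofReal (‖A (e j)‖ ^ 2) := by
        refine ENNReal.tsum_le_tsum fun j => ?_
        have hb : ∑ i : Fin m, ‖(⟪f i, A (e j)⟫_ℂ)‖ ^ 2 ≤ ‖A (e j)‖ ^ 2 :=
          hf.sum_inner_products_le (A (e j))
        calc ∑ i : Fin m, ENNReal.ofReal (‖(⟪e j, S (f i)⟫_ℂ)‖ ^ 2)
            = ENNReal.ofReal (∑ i : Fin m, ‖(⟪f i, A (e j)⟫_ℂ)‖ ^ 2) := by
              rw [ENNReal.ofReal_sum_of_nonneg (fun i _ => by positivity)]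
              congr 1; ext i
              rw [← ContinuousLinearMap.adjoint_inner_left S (f i) (e j), ← hA,
                norm_inner_symm]
          _ ≤ ENNReal.ofReal (‖A (e j)‖ ^ 2) := ENNReal.ofReal_le_ofReal hb
    _ = ∑' j, ∑' i, ENNReal.ofReal (‖(⟪e i, A (e j)⟫_ℂ)‖ ^ 2) := by
        simp_rw [parseval_ennreal e]
    _ = ∑' j, ∑' i, ENNReal.ofReal (‖(⟪e j, S (e i)⟫_ℂ)‖ ^ 2) := by
        refine tsum_congr fun j => tsum_congr fun i => ?_
        rw [hA, ContinuousLinearMap.adjoint_inner_right S (e i) (e j), norm_inner_symm]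
    _ = ∑' i, ∑' j, ENNReal.ofReal (‖(⟪e j, S (e i)⟫_ℂ)‖ ^ 2) := ENNReal.tsum_comm
    _ = ∑' i, ENNReal.ofReal (‖S (e i)‖ ^ 2) := by
        simp_rw [parseval_ennreal e]


/-- Greedy construction of an orthonormal family on which `S` is large. -/
lemma exists_orthonormal_family (S : H →L[ℂ] H) {t : ℝ} (ht : 0 ≤ t) (n : ℕ)
    (hstep : ∀ R : H →L[ℂ] H,
      Module.rank ℂ (LinearMap.range (R : H →ₗ[ℂ] H)) ≤ (n : Cardinal) → t < ‖S - R‖) :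
    ∀ k, k ≤ n → ∃ f : Fin k → H, Orthonormal ℂ f ∧ ∀ i, t < ‖S (f i)‖ := by
  intro k
  induction k with
  | zero =>
    exact fun _ => ⟨Fin.elim0, ⟨fun i => i.elim0, fun i => i.elim0⟩, fun i => i.elim0⟩
  | succ k ih =>
    intro hk
    obtain ⟨f, hf, hSf⟩ := ih (le_trans (Nat.le_succ k) hk)
    set K := Submodule.span ℂ (Set.range f) with hK
    haveI : FiniteDimensional ℂ K := FiniteDimensional.span_of_finite ℂ (Set.finite_range f)
    set P : H →L[ℂ] H := K.subtypeL.comp K.orthogonalProjectionOnto with hP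
    set R := S.comp P with hR
    have hrangeP : LinearMap.range (P : H →ₗ[ℂ] H) ≤ K := by
      rintro _ ⟨x, rfl⟩
      exact (K.orthogonalProjectionOnto x).2
    have hrank : Module.rank ℂ (LinearMap.range (R : H →ₗ[ℂ] H)) ≤ (n : Cardinal) := by
      have h1 : Module.rank ℂ (LinearMap.range (R : H →ₗ[ℂ] H)) ≤
          Module.rank ℂ (LinearMap.range (P : H →ₗ[ℂ] H)) := by
        have : (R : H →ₗ[ℂ] H) = (S : H →ₗ[ℂ] H).comp (P : H →ₗ[ℂ] H) := rfl
        rw [this]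
        exact LinearMap.rank_comp_le_right _ _
      have h2 : Module.rank ℂ (LinearMap.range (P : H →ₗ[ℂ] H)) ≤ Module.rank ℂ K :=
        Submodule.rank_mono hrangeP
      have h3 : Module.rank ℂ K ≤ (k : Cardinal) := by
        refine le_trans (rank_span_le _) ?_
        simpa using Cardinal.mk_range_le_lift (f := f)
      have h4 : (k : Cardinal) ≤ (n : Cardinal) :=
        Nat.cast_le.mpr (le_trans (Nat.le_succ k) hk)
      exact le_trans h1 (le_trans h2 (le_trans h3 h4))
    have h1 : t < ‖S - R‖ := hstep R hrank
    have h2 : ∃ y : H, t * ‖y‖ < ‖(S - R) y‖ := by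
      by_contra hcon
      push_neg at hcon
      exact absurd (ContinuousLinearMap.opNorm_le_bound _ ht hcon) (not_le.mpr h1)
    obtain ⟨y, hy⟩ := h2
    set z := y - P y with hz
    have hz_orth : z ∈ Kᗮ := Submodule.sub_starProjection_mem_orthogonal (K := K) y
    have hSz : t * ‖y‖ < ‖S z‖ := by
      have : (S - R) y = S z := by
        simp [hz, hR, map_sub]
      rwa [this] at hy
    have hPyK : P y ∈ K := hrangeP ⟨y, rfl⟩
    have hinner : ⟪P y, z⟫_ℂ = 0 := hz_orth (P y) hPyK
    have hzy : ‖z‖ ≤ ‖y‖ := by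
      have hpy : ‖y‖ ^ 2 = ‖P y‖ ^ 2 + ‖z‖ ^ 2 := by
        have hyz : y = P y + z := by rw [hz]; abel
        have h5 := norm_add_sq (𝕜 := ℂ) (P y) z
        rw [hinner] at h5
        simp only [map_zero, mul_zero, add_zero] at h5
        have hyz' : ‖y‖ = ‖P y + z‖ := by rw [← hyz]
        rw [hyz', h5]
      nlinarith [norm_nonneg z, norm_nonneg y, norm_nonneg (P y)]
    have hz0 : 0 < ‖z‖ := by
      rcases eq_or_lt_of_le (norm_nonneg z) with h | h
      · exfalso
        have : z = 0 := by rwa [eq_comm, norm_eq_zero] at h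
        rw [this, map_zero, norm_zero] at hSz
        nlinarith [norm_nonneg y]
      · exact h
    set x := (‖z‖⁻¹ : ℝ) • z with hx
    have hx_orth : x ∈ Kᗮ := Kᗮ.smul_mem _ hz_orth
    have hxnorm : ‖x‖ = 1 := by
      rw [hx, norm_smul, norm_inv, norm_norm, inv_mul_cancel₀ (ne_of_gt hz0)]
    have hSx : t < ‖S x‖ := by
      have : ‖S x‖ = ‖z‖⁻¹ * ‖S z‖ := by
        rw [hx, ContinuousLinearMap.map_smul_of_tower, norm_smul, norm_inv, norm_norm]
      rw [this]
      rw [lt_inv_mul_iff₀ hz0]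
      calc ‖z‖ * t = t * ‖z‖ := by ring
        _ ≤ t * ‖y‖ := by nlinarith
        _ < ‖S z‖ := hSz
    -- inner products between old vectors and x vanish
    have hfK : ∀ i : Fin k, f i ∈ K := fun i =>
      Submodule.subset_span (Set.mem_range_self i)
    have hof : ∀ i : Fin k, ⟪f i, x⟫_ℂ = 0 := fun i => hx_orth (f i) (hfK i)
    refine ⟨Fin.snoc f x, ⟨?_, ?_⟩, ?_⟩
    · intro i
      refine Fin.lastCases ?_ (fun j => ?_) i
      · simpa using hxnorm
      · simpa using hf.1 j
    · intro i j
      have main : ∀ i j : Fin (k+1), i ≠ j →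
          ⟪(Fin.snoc f x : Fin (k+1) → H) i, (Fin.snoc f x : Fin (k+1) → H) j⟫_ℂ = 0 := by
        intro i j hij
        rcases Fin.eq_castSucc_or_eq_last i with ⟨i', rfl⟩ | rfl <;>
          rcases Fin.eq_castSucc_or_eq_last j with ⟨j', rfl⟩ | rfl
        · simp only [Fin.snoc_castSucc]
          exact hf.2 (fun h => hij (by rw [h]))
        · simp only [Fin.snoc_last, Fin.snoc_castSucc]
          exact hof i'
        · simp only [Fin.snoc_last, Fin.snoc_castSucc]
          exact inner_eq_zero_symm.mp (hof j')
        · exact absurd rfl hij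
      exact main i j
    · intro i
      refine Fin.lastCases ?_ (fun j => ?_) i
      · simpa using hSx
      · simpa using hSf j


lemma singVal_bddBelow (T : H →L[ℂ] H) (n : ℕ) :
    BddBelow {c : ℝ | ∃ R : H →L[ℂ] H,
      Module.rank ℂ (LinearMap.range (R : H →ₗ[ℂ] H)) ≤ (n : Cardinal) ∧ c = ‖T - R‖} :=
  ⟨0, by rintro x ⟨R, -, rfl⟩; exact norm_nonneg _⟩

lemma singVal_nonempty (T : H →L[ℂ] H) (n : ℕ) :
    {c : ℝ | ∃ R : H →L[ℂ] H,
      Module.rank ℂ (LinearMap.range (R : H →ₗ[ℂ] H)) ≤ (n : Cardinal) ∧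
        c = ‖T - R‖}.Nonempty :=
  ⟨‖T - 0‖, 0, by simp, rfl⟩

/-- Key lemma: `μ(n, S) ≤ n^{-1/2} ‖S‖_HS`. -/
lemma ofReal_singVal_le_hsNorm (S : H →L[ℂ] H) {n : ℕ} (hn : 1 ≤ n) :
    ENNReal.ofReal (singVal S n) ≤
      ENNReal.ofReal ((n : ℝ) ^ (-(1 / 2) : ℝ)) * hsNorm e S := by
  have hnpos : (0 : ℝ) < n := by exact_mod_cast hn
  set c := ENNReal.ofReal ((n : ℝ) ^ (-(1 / 2) : ℝ)) with hc
  have hc0 : c ≠ 0 := by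
    rw [hc, Ne, ENNReal.ofReal_eq_zero, not_le]
    positivity
  set B2 := ∑' i, ENNReal.ofReal (‖S (e i)‖ ^ 2) with hB2
  by_cases htop : B2 = ∞
  · have htopn : hsNorm e S = ∞ := by
      rw [hsNorm, ← hB2, htop, ENNReal.top_rpow_of_pos (by norm_num)]
    rw [htopn, ENNReal.mul_top hc0]
    exact le_top
  · set β2 := B2.toReal with hβ2
    have hβ2nn : 0 ≤ β2 := ENNReal.toReal_nonneg
    set t := Real.sqrt (β2 / n) with htdef
    have ht0 : 0 ≤ t := Real.sqrt_nonneg _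
    have key : singVal S n ≤ t := by
      by_contra hcon
      push_neg at hcon
      have hstep : ∀ R : H →L[ℂ] H,
          Module.rank ℂ (LinearMap.range (R : H →ₗ[ℂ] H)) ≤ (n : Cardinal) →
            t < ‖S - R‖ := fun R hR =>
        lt_of_lt_of_le hcon (csInf_le (singVal_bddBelow S n) ⟨R, hR, rfl⟩)
      obtain ⟨f, hf, hSf⟩ := exists_orthonormal_family S ht0 n hstep n le_rfl
      have hsum := sum_sq_le_hs e f hf S
      have hsum' : ∑ i : Fin n, ‖S (f i)‖ ^ 2 ≤ β2 := by
        rw [← ENNReal.ofReal_sum_of_nonneg (fun i _ => by positivity), ← hB2,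
          ← ENNReal.ofReal_toReal htop, ← hβ2] at hsum
        exact (ENNReal.ofReal_le_ofReal_iff hβ2nn).mp hsum
      have hterm : ∀ i : Fin n, t ^ 2 < ‖S (f i)‖ ^ 2 := fun i => by
        nlinarith [hSf i, ht0]
      have hlt : β2 < ∑ i : Fin n, ‖S (f i)‖ ^ 2 := by
        have h6 : ∑ _i : Fin n, t ^ 2 < ∑ i : Fin n, ‖S (f i)‖ ^ 2 := by
          refine Finset.sum_lt_sum_of_nonempty ?_ fun i _ => hterm i
          rw [Finset.univ_nonempty_iff]
          exact Fin.pos_iff_nonempty.mp (by omega)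
        have h7 : ∑ _i : Fin n, t ^ 2 = β2 := by
          rw [Finset.sum_const, Finset.card_univ, Fintype.card_fin, nsmul_eq_mul,
            htdef, Real.sq_sqrt (by positivity)]
          field_simp
        linarith
      linarith
    calc ENNReal.ofReal (singVal S n) ≤ ENNReal.ofReal t := ENNReal.ofReal_le_ofReal key
      _ = c * hsNorm e S := by
          have h1 : t = (n : ℝ) ^ (-(1 / 2) : ℝ) * β2 ^ ((1 / 2) : ℝ) := by
            rw [htdef, Real.sqrt_eq_rpow, Real.div_rpow hβ2nn (le_of_lt hnpos),
              Real.rpow_neg (le_of_lt hnpos)]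
            ring
          rw [h1, ENNReal.ofReal_mul (by positivity), ← hc]
          congr 1
          rw [hsNorm, ← hB2, ← ENNReal.ofReal_toReal htop, ← hβ2,
            ENNReal.ofReal_rpow_of_nonneg hβ2nn (by norm_num)]
end Aux

/-- Birman–Solomyak: `μ(2n, T) ≤ n^{-1/2} e(n, T)`. -/
theorem singVal_two_mul_le {H : Type*} [NormedAddCommGroup H] [InnerProductSpace ℂ H]
    [CompleteSpace H] {ι : Type*} (e : HilbertBasis ι ℂ H) (T : H →L[ℂ] H)
    (hT : IsCompactOperator (T : H → H)) (n : ℕ) (hn : 1 ≤ n) :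
    ENNReal.ofReal (singVal T (2 * n)) ≤
      ENNReal.ofReal ((n : ℝ) ^ (-(1 / 2) : ℝ)) * hsApprox e T n := by
  set c := ENNReal.ofReal ((n : ℝ) ^ (-(1 / 2) : ℝ)) with hc
  have hnpos : (0 : ℝ) < n := by exact_mod_cast hn
  have hc0 : c ≠ 0 := by
    rw [hc, Ne, ENNReal.ofReal_eq_zero, not_le]
    positivity
  have hctop : c ≠ ∞ := ENNReal.ofReal_ne_top
  simp only [hsApprox, Set.mem_setOf_eq]
  rw [ENNReal.mul_iInf_of_ne hc0 hctop]
  refine le_iInf fun R => ?_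
  rw [ENNReal.mul_iInf_of_ne hc0 hctop]
  refine le_iInf fun hR => ?_
  have key1 : singVal T (2 * n) ≤ singVal (T - R) n := by
    refine le_csInf (singVal_nonempty (T - R) n) ?_
    rintro b ⟨R', hR', rfl⟩
    refine csInf_le (singVal_bddBelow T (2 * n)) ⟨R + R', ?_, ?_⟩
    · have hcoe : ((R + R' : H →L[ℂ] H) : H →ₗ[ℂ] H) =
          (R : H →ₗ[ℂ] H) + (R' : H →ₗ[ℂ] H) := rfl
      rw [hcoe]
      refine le_trans (LinearMap.rank_add_le _ _) ?_
      refine le_trans (add_le_add hR hR') ?_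
      rw [← Nat.cast_add]
      exact Nat.cast_le.mpr (by omega)
    · congr 1
      abel
  calc ENNReal.ofReal (singVal T (2 * n))
      ≤ ENNReal.ofReal (singVal (T - R) n) := ENNReal.ofReal_le_ofReal key1
    _ ≤ c * hsNorm e (T - R) := ofReal_singVal_le_hsNorm e (T - R) hn
end
end

section
/- Discrete Hardy inequality: Let (a_n)_{n≥1} and (b_n)_{n≥1} be nonnegative, monotonically decreasing sequences of real numbers, and suppose there exist constants μ, r, C > 0 such that a_n ≤ C n^{−r} (Σ_{k=n}^∞ k^{rμ−1} b_k^μ)^{1/μ} for all n ≥ 1. Then for every 0 < q ≤ ∞ and every s > r, the Lorentz sequence quasinorm satisfies ‖(a_n)‖_{ℓ_{1/s, q}} ≤ C' ‖(b_n)‖_{ℓ_{1/s, q}} for some constant C' depending only on μ, s, r, C. -/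
open MeasureTheory ENNReal

noncomputable section

/-- Lorentz sequence quasinorm `ℓ_{p,q}` of a nonnegative (already decreasing) sequence,
indexed from `n = 1` (so `x n` stands for `x_{n+1}`). -/
def lorentzNorm (p : ℝ) (q : ℝ≥0∞) (x : ℕ → ℝ≥0∞) : ℝ≥0∞ :=
  if q = ∞ then ⨆ n : ℕ, ENNReal.ofReal (((n : ℝ) + 1) ^ (1 / p)) * x n
  else (∑' n : ℕ,
      (ENNReal.ofReal (((n : ℝ) + 1) ^ (1 / p - 1 / q.toReal)) * x n) ^ q.toReal) ^
    (1 / q.toReal)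

/-- The `ℓ_p` quasinorm of a nonnegative sequence. -/
def lpSeqNorm (p : ℝ) (b : ℕ → ℝ) : ℝ≥0∞ :=
  (∑' n : ℕ, ENNReal.ofReal (b n ^ p)) ^ (1 / p)

section discreteHardyAux
open intervalIntegral Set Finset

lemma mvt_upper {p x y d : ℝ} (hp : p ≠ 0) (hx : 0 < x) (hxy : x ≤ y)
    (hd : ∀ u ∈ Set.Icc x y, u ^ (p-1) ≤ d) : (y ^ p - x ^ p) / p ≤ d * (y - x) := by
  have h0 : (0:ℝ) ∉ Set.uIcc x y := by
    rw [Set.uIcc_of_le hxy]; intro h; exact absurd (h.1) (by linarith)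
  have hint : ∫ u in x..y, u ^ (p-1) = (y ^ p - x ^ p) / p := by
    rw [integral_rpow (Or.inr ⟨by intro h; apply hp; linarith, h0⟩)]
    ring_nf
  have hi1 : IntervalIntegrable (fun u : ℝ => u ^ (p-1)) volume x y :=
    intervalIntegrable_rpow (Or.inr h0)
  have hi2 : IntervalIntegrable (fun _ : ℝ => d) volume x y := intervalIntegrable_const
  have := integral_mono_on hxy hi1 hi2 hd
  rw [hint, intervalIntegral.integral_const, smul_eq_mul] at this
  linarith [this]

lemma mvt_lower {p x y d : ℝ} (hp : p ≠ 0) (hx : 0 < x) (hxy : x ≤ y)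
    (hd : ∀ u ∈ Set.Icc x y, d ≤ u ^ (p-1)) : d * (y - x) ≤ (y ^ p - x ^ p) / p := by
  have h0 : (0:ℝ) ∉ Set.uIcc x y := by
    rw [Set.uIcc_of_le hxy]; intro h; exact absurd (h.1) (by linarith)
  have hint : ∫ u in x..y, u ^ (p-1) = (y ^ p - x ^ p) / p := by
    rw [integral_rpow (Or.inr ⟨by intro h; apply hp; linarith, h0⟩)]
    ring_nf
  have hi1 : IntervalIntegrable (fun u : ℝ => u ^ (p-1)) volume x y :=
    intervalIntegrable_rpow (Or.inr h0)
  have hi2 : IntervalIntegrable (fun _ : ℝ => d) volume x y := intervalIntegrable_const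
  have := integral_mono_on hxy hi2 hi1 hd
  rw [hint, intervalIntegral.integral_const, smul_eq_mul] at this
  linarith [this]

lemma L3 {β : ℝ} (hβ : 0 < β) {x : ℝ} (hx : 1 ≤ x) :
    (x+1) ^ β - x ^ β ≤ (β + β * 2 ^ (1-β)) * (x+1) ^ (β-1) := by
  have hx0 : (0:ℝ) < x := by linarith
  have hx1 : (0:ℝ) < x + 1 := by linarith
  have hp1 : (0:ℝ) ≤ (x+1) ^ (β-1) := (Real.rpow_pos_of_pos hx1 _).le
  have h2p : (0:ℝ) < 2 ^ (1-β) := Real.rpow_pos_of_pos (by norm_num) _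
  rcases le_or_gt 1 β with hβ1 | hβ1
  · have h := mvt_upper (p := β) (x := x) (y := x+1) (d := (x+1)^(β-1)) hβ.ne' hx0 (by linarith)
      (fun u hu => Real.rpow_le_rpow (by linarith [hu.1]) hu.2 (by linarith))
    rw [div_le_iff₀ hβ, add_sub_cancel_left, mul_one] at h
    calc (x+1)^β - x^β ≤ (x+1)^(β-1) * β := h
      _ ≤ (β + β * 2 ^ (1-β)) * (x+1) ^ (β-1) := by
          nlinarith [mul_nonneg (mul_nonneg hβ.le h2p.le) hp1]
  · have h := mvt_upper (p := β) (x := x) (y := x+1) (d := x^(β-1)) hβ.ne' hx0 (by linarith)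
      (fun u hu => Real.rpow_le_rpow_of_nonpos hx0 hu.1 (by linarith))
    rw [div_le_iff₀ hβ, add_sub_cancel_left, mul_one] at h
    have hkey : x ^ (β-1) ≤ 2 ^ (1-β) * (x+1) ^ (β-1) := by
      have h1 : (x+1) ≤ 2 * x := by linarith
      have h2 : (2*x) ^ (β-1) ≤ (x+1) ^ (β-1) :=
        Real.rpow_le_rpow_of_nonpos hx1 h1 (by linarith)
      have h3 : (2*x) ^ (β-1) = 2 ^ (β-1) * x ^ (β-1) :=
        Real.mul_rpow (by norm_num) hx0.le
      have h4 : (2:ℝ) ^ (1-β) * 2 ^ (β-1) = 1 := by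
        rw [← Real.rpow_add (by norm_num)]; norm_num
      calc x ^ (β-1) = 2 ^ (1-β) * (2 ^ (β-1) * x ^ (β-1)) := by
            rw [← mul_assoc, h4, one_mul]
        _ = 2 ^ (1-β) * (2*x) ^ (β-1) := by rw [h3]
        _ ≤ 2 ^ (1-β) * (x+1) ^ (β-1) := by nlinarith
    calc (x+1)^β - x^β ≤ x^(β-1) * β := h
      _ ≤ (2 ^ (1-β) * (x+1) ^ (β-1)) * β := by nlinarith
      _ ≤ (β + β * 2 ^ (1-β)) * (x+1) ^ (β-1) := by nlinarith

lemma L2 {γ : ℝ} (hγ : 0 < γ) (m : ℕ) :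
    ∑ n ∈ Finset.range (m+1), ((n:ℝ)+1) ^ (γ-1) ≤ (1 + 1/γ) * ((m:ℝ)+1) ^ γ := by
  have hm1 : (0:ℝ) < (m:ℝ)+1 := by positivity
  have hpow : (0:ℝ) ≤ ((m:ℝ)+1) ^ γ := (Real.rpow_pos_of_pos hm1 _).le
  rcases le_or_gt 1 γ with hγ1 | hγ1
  · have hterm : ∀ n ∈ Finset.range (m+1), ((n:ℝ)+1) ^ (γ-1) ≤ ((m:ℝ)+1) ^ (γ-1) := by
      intro n hn
      have : (n:ℝ) ≤ m := by exact_mod_cast Nat.lt_succ_iff.mp (Finset.mem_range.mp hn)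
      exact Real.rpow_le_rpow (by positivity) (by linarith) (by linarith)
    calc ∑ n ∈ Finset.range (m+1), ((n:ℝ)+1) ^ (γ-1)
        ≤ ∑ n ∈ Finset.range (m+1), ((m:ℝ)+1) ^ (γ-1) := Finset.sum_le_sum hterm
      _ = ((m:ℝ)+1) * ((m:ℝ)+1) ^ (γ-1) := by
          rw [Finset.sum_const, Finset.card_range, nsmul_eq_mul]; push_cast; ring
      _ = ((m:ℝ)+1) ^ γ := by
          rw [← Real.rpow_one_add' hm1.le (by intro h; linarith)]; ring_nf
      _ ≤ (1 + 1/γ) * ((m:ℝ)+1) ^ γ := by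
          have : (0:ℝ) < 1/γ := by positivity
          nlinarith
  · have hterm : ∀ n ∈ Finset.range (m+1),
        ((n:ℝ)+1) ^ (γ-1) ≤ (1/γ) * ((((n+1:ℕ)):ℝ) ^ γ - ((n:ℕ):ℝ) ^ γ) := by
      intro n _
      rcases Nat.eq_zero_or_pos n with h0 | hn1
      · subst h0
        simp only [Nat.cast_zero, Nat.cast_one, zero_add]
        rw [Real.one_rpow, Real.one_rpow, Real.zero_rpow hγ.ne']
        have : 1/γ ≥ 1 := by rw [ge_iff_le, le_div_iff₀ hγ]; linarith
        linarith
      · have hn0 : (0:ℝ) < (n:ℝ) := by exact_mod_cast hn1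
        have h := mvt_lower (p := γ) (x := (n:ℝ)) (y := (n:ℝ)+1) (d := ((n:ℝ)+1)^(γ-1))
          hγ.ne' hn0 (by linarith)
          (fun u hu => Real.rpow_le_rpow_of_nonpos (by linarith [hu.1]) hu.2 (by linarith))
        rw [add_sub_cancel_left, mul_one] at h
        have h' : ((n:ℝ)+1) ^ (γ-1) ≤ (((n:ℝ)+1) ^ γ - (n:ℝ) ^ γ) / γ := h
        push_cast
        rw [one_div, inv_mul_eq_div]
        exact h'
    calc ∑ n ∈ Finset.range (m+1), ((n:ℝ)+1) ^ (γ-1)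
        ≤ ∑ n ∈ Finset.range (m+1), (1/γ) * ((((n+1:ℕ)):ℝ) ^ γ - ((n:ℕ):ℝ) ^ γ) :=
          Finset.sum_le_sum hterm
      _ = (1/γ) * ∑ n ∈ Finset.range (m+1), ((((n+1:ℕ)):ℝ) ^ γ - ((n:ℕ):ℝ) ^ γ) := by
          rw [Finset.mul_sum]
      _ = (1/γ) * (((((m+1:ℕ)):ℝ)) ^ γ - ((0:ℕ):ℝ) ^ γ) := by
          rw [Finset.sum_range_sub (fun i => ((i:ℕ):ℝ) ^ γ)]
      _ = (1/γ) * ((m:ℝ)+1) ^ γ := by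
          push_cast
          rw [Real.zero_rpow hγ.ne']; ring
      _ ≤ (1 + 1/γ) * ((m:ℝ)+1) ^ γ := by nlinarith

lemma L1real {γ : ℝ} (hγ : 0 < γ) (n K : ℕ) :
    ∑ k ∈ Finset.range K, ((n:ℝ)+(k:ℝ)+1) ^ (-γ-1) ≤ (1 + 1/γ) * ((n:ℝ)+1) ^ (-γ) := by
  have hn1 : (0:ℝ) < (n:ℝ)+1 := by positivity
  have hpow : (0:ℝ) ≤ ((n:ℝ)+1) ^ (-γ) := (Real.rpow_pos_of_pos hn1 _).le
  rcases Nat.eq_zero_or_pos K with h0 | hK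
  · subst h0; simp; positivity
  obtain ⟨K', rfl⟩ : ∃ K', K = K' + 1 := ⟨K - 1, by omega⟩
  rw [Finset.sum_range_succ']
  have hf0 : ((n:ℝ)+(0:ℕ)+1) ^ (-γ-1) ≤ ((n:ℝ)+1) ^ (-γ) := by
    push_cast
    rw [add_zero]
    exact Real.rpow_le_rpow_of_exponent_le (by linarith) (by linarith)
  have htail : ∑ i ∈ Finset.range K', ((n:ℝ)+((i+1:ℕ):ℝ)+1) ^ (-γ-1)
      ≤ (1/γ) * ((n:ℝ)+1) ^ (-γ) := by
    have hterm : ∀ i ∈ Finset.range K', ((n:ℝ)+((i+1:ℕ):ℝ)+1) ^ (-γ-1)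
        ≤ (1/γ) * (((n:ℝ)+(i:ℝ)+1) ^ (-γ) - ((n:ℝ)+((i+1:ℕ):ℝ)+1) ^ (-γ)) := by
      intro i _
      have hx0 : (0:ℝ) < (n:ℝ)+(i:ℝ)+1 := by positivity
      have h := mvt_lower (p := -γ) (x := (n:ℝ)+(i:ℝ)+1) (y := (n:ℝ)+(i:ℝ)+2)
        (d := ((n:ℝ)+(i:ℝ)+2) ^ (-γ-1)) (by linarith) hx0 (by linarith)
        (fun u hu => Real.rpow_le_rpow_of_nonpos (by linarith [hu.1]) hu.2 (by linarith))
      have heq : ((n:ℝ)+(i:ℝ)+2) - ((n:ℝ)+(i:ℝ)+1) = 1 := by ring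
      rw [heq, mul_one] at h
      have hdiv : (((n:ℝ)+(i:ℝ)+2) ^ (-γ) - ((n:ℝ)+(i:ℝ)+1) ^ (-γ)) / (-γ)
          = (1/γ) * (((n:ℝ)+(i:ℝ)+1) ^ (-γ) - ((n:ℝ)+(i:ℝ)+2) ^ (-γ)) := by
        rw [div_neg, ← neg_div, neg_sub, one_div, div_eq_inv_mul]
      rw [hdiv] at h
      push_cast
      have e1 : (n:ℝ)+((i:ℝ)+1)+1 = (n:ℝ)+(i:ℝ)+2 := by ring
      rw [e1]
      exact h
    calc ∑ i ∈ Finset.range K', ((n:ℝ)+((i+1:ℕ):ℝ)+1) ^ (-γ-1)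
        ≤ ∑ i ∈ Finset.range K', (1/γ) * (((n:ℝ)+(i:ℝ)+1) ^ (-γ) - ((n:ℝ)+((i+1:ℕ):ℝ)+1) ^ (-γ)) :=
          Finset.sum_le_sum hterm
      _ = (1/γ) * ∑ i ∈ Finset.range K',
            ((fun j : ℕ => ((n:ℝ)+(j:ℝ)+1) ^ (-γ)) i - (fun j : ℕ => ((n:ℝ)+(j:ℝ)+1) ^ (-γ)) (i+1)) := by
          rw [Finset.mul_sum]
      _ = (1/γ) * (((n:ℝ)+(0:ℕ)+1) ^ (-γ) - ((n:ℝ)+(K':ℕ)+1) ^ (-γ)) := by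
          rw [Finset.sum_range_sub' (fun j : ℕ => ((n:ℝ)+(j:ℝ)+1) ^ (-γ))]
      _ ≤ (1/γ) * ((n:ℝ)+1) ^ (-γ) := by
          have h1 : (0:ℝ) ≤ ((n:ℝ)+(K':ℕ)+1) ^ (-γ) := by positivity
          have h2 : (0:ℝ) < 1/γ := by positivity
          push_cast
          have e : (n:ℝ)+0+1 = (n:ℝ)+1 := by ring
          rw [e]
          nlinarith [mul_nonneg h2.le h1]
  calc ∑ i ∈ Finset.range K', ((n:ℝ)+((i+1:ℕ):ℝ)+1) ^ (-γ-1) + ((n:ℝ)+(0:ℕ)+1) ^ (-γ-1)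
      ≤ (1/γ) * ((n:ℝ)+1) ^ (-γ) + ((n:ℝ)+1) ^ (-γ) := add_le_add htail hf0
    _ = (1 + 1/γ) * ((n:ℝ)+1) ^ (-γ) := by ring

lemma L1 {γ : ℝ} (hγ : 0 < γ) (n : ℕ) :
    ∑' k : ℕ, ENNReal.ofReal (((n:ℝ)+(k:ℝ)+1) ^ (-γ-1))
      ≤ ENNReal.ofReal ((1 + 1/γ) * ((n:ℝ)+1) ^ (-γ)) := by
  apply ENNReal.tsum_le_of_sum_range_le
  intro K
  rw [← ENNReal.ofReal_sum_of_nonneg (fun i _ => by positivity)]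
  exact ENNReal.ofReal_le_ofReal (L1real hγ n K)

lemma step2 {μ r C s' : ℝ} (hμ : 0 < μ) (hr : 0 < r) (hC : 0 < C) (hs' : r < s')
    (b : ℕ → ℝ) (hb : ∀ n, 0 ≤ b n) (A : ℕ → ℝ≥0∞)
    (hyp : ∀ n : ℕ, A n ≤ ENNReal.ofReal (C * ((n : ℝ) + 1) ^ (-r)) *
      (∑' k : ℕ, ENNReal.ofReal
        (((n : ℝ) + (k : ℝ) + 1) ^ (r * μ - 1) * b (n + k) ^ μ)) ^ (1 / μ))
    (n : ℕ) :
    A n ≤ ENNReal.ofReal (C * ((1 + 1/((s'-r)*μ)) ^ (1/μ))) *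
      (ENNReal.ofReal (((n:ℝ)+1) ^ (-s')) *
        ⨆ k : ℕ, ENNReal.ofReal (((n:ℝ)+(k:ℝ)+1) ^ s') * ENNReal.ofReal (b (n+k))) := by
  set γ₁ : ℝ := (s'-r)*μ with hγ₁def
  have hγ₁ : 0 < γ₁ := _root_.mul_pos (by linarith) hμ
  set M : ℝ≥0∞ := ⨆ k : ℕ, ENNReal.ofReal (((n:ℝ)+(k:ℝ)+1) ^ s') * ENNReal.ofReal (b (n+k))
    with hMdef
  have hterm : ∀ k : ℕ, ENNReal.ofReal (((n : ℝ) + (k : ℝ) + 1) ^ (r * μ - 1) * b (n + k) ^ μ)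
      ≤ ENNReal.ofReal (((n:ℝ)+(k:ℝ)+1) ^ (-γ₁-1)) * M ^ μ := by
    intro k
    have hx : (0:ℝ) < (n:ℝ)+(k:ℝ)+1 := by positivity
    have hsplit : ((n : ℝ) + (k : ℝ) + 1) ^ (r * μ - 1)
        = ((n:ℝ)+(k:ℝ)+1) ^ (-γ₁-1) * ((n:ℝ)+(k:ℝ)+1) ^ (s'*μ) := by
      rw [← Real.rpow_add hx, hγ₁def]; ring_nf
    rw [ENNReal.ofReal_mul (by positivity), hsplit,
      ENNReal.ofReal_mul (by positivity), mul_assoc]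
    apply mul_le_mul_right
    have h1 : ENNReal.ofReal (((n:ℝ)+(k:ℝ)+1) ^ (s'*μ)) * ENNReal.ofReal (b (n+k) ^ μ)
        = (ENNReal.ofReal (((n:ℝ)+(k:ℝ)+1) ^ s') * ENNReal.ofReal (b (n+k))) ^ μ := by
      rw [ENNReal.mul_rpow_of_nonneg _ _ hμ.le,
        ENNReal.ofReal_rpow_of_pos (Real.rpow_pos_of_pos hx _),
        ← Real.rpow_mul hx.le,
        ENNReal.ofReal_rpow_of_nonneg (hb _) hμ.le]
    rw [h1]
    exact ENNReal.rpow_le_rpow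
      (le_iSup (fun k : ℕ => ENNReal.ofReal (((n:ℝ)+(k:ℝ)+1) ^ s') * ENNReal.ofReal (b (n+k))) k)
      hμ.le
  have hT : (∑' k : ℕ, ENNReal.ofReal
        (((n : ℝ) + (k : ℝ) + 1) ^ (r * μ - 1) * b (n + k) ^ μ))
      ≤ ENNReal.ofReal ((1 + 1/γ₁) * ((n:ℝ)+1) ^ (-γ₁)) * M ^ μ := by
    calc _ ≤ ∑' k : ℕ, ENNReal.ofReal (((n:ℝ)+(k:ℝ)+1) ^ (-γ₁-1)) * M ^ μ :=
          ENNReal.tsum_le_tsum hterm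
      _ = (∑' k : ℕ, ENNReal.ofReal (((n:ℝ)+(k:ℝ)+1) ^ (-γ₁-1))) * M ^ μ :=
          ENNReal.tsum_mul_right
      _ ≤ _ := mul_le_mul_left (L1 hγ₁ n) _
  have hT' : (∑' k : ℕ, ENNReal.ofReal
        (((n : ℝ) + (k : ℝ) + 1) ^ (r * μ - 1) * b (n + k) ^ μ)) ^ (1/μ)
      ≤ ENNReal.ofReal (((1 + 1/γ₁) ^ (1/μ)) * ((n:ℝ)+1) ^ (r-s')) * M := by
    calc _ ≤ (ENNReal.ofReal ((1 + 1/γ₁) * ((n:ℝ)+1) ^ (-γ₁)) * M ^ μ) ^ (1/μ) :=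
          ENNReal.rpow_le_rpow hT (by positivity)
      _ = ENNReal.ofReal (((1 + 1/γ₁) * ((n:ℝ)+1) ^ (-γ₁)) ^ (1/μ)) * (M ^ μ) ^ (1/μ) := by
          rw [ENNReal.mul_rpow_of_nonneg _ _ (by positivity),
            ENNReal.ofReal_rpow_of_pos (by positivity)]
      _ = ENNReal.ofReal (((1 + 1/γ₁) ^ (1/μ)) * ((n:ℝ)+1) ^ (r-s')) * M := by
          rw [← ENNReal.rpow_mul, mul_one_div, div_self hμ.ne', ENNReal.rpow_one]
          congr 1
          rw [Real.mul_rpow (by positivity) (by positivity), ← Real.rpow_mul (by positivity)]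
          have hμ0 : μ ≠ 0 := hμ.ne'
          have he : -γ₁ * (1/μ) = r - s' := by rw [hγ₁def]; field_simp; ring
          rw [he]
  calc A n ≤ ENNReal.ofReal (C * ((n : ℝ) + 1) ^ (-r)) *
        (∑' k : ℕ, ENNReal.ofReal
          (((n : ℝ) + (k : ℝ) + 1) ^ (r * μ - 1) * b (n + k) ^ μ)) ^ (1 / μ) := hyp n
    _ ≤ ENNReal.ofReal (C * ((n : ℝ) + 1) ^ (-r)) *
        (ENNReal.ofReal (((1 + 1/γ₁) ^ (1/μ)) * ((n:ℝ)+1) ^ (r-s')) * M) :=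
        mul_le_mul_right hT' _
    _ = ENNReal.ofReal (C * ((1 + 1/γ₁) ^ (1/μ))) *
        (ENNReal.ofReal (((n:ℝ)+1) ^ (-s')) * M) := by
        rw [← mul_assoc, ← ENNReal.ofReal_mul (by positivity)]
        have hpp : ((n:ℝ)+1)^(-r) * ((n:ℝ)+1)^(r-s') = ((n:ℝ)+1)^(-s') := by
          rw [← Real.rpow_add (by positivity)]
          congr 1
          ring
        have hco : C * ((n:ℝ)+1)^(-r) * ((1 + 1/γ₁) ^ (1/μ) * ((n:ℝ)+1)^(r-s'))
            = (C * ((1 + 1/γ₁) ^ (1/μ))) * ((n:ℝ)+1)^(-s') := by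
          rw [← hpp]; ring
        rw [hco, ENNReal.ofReal_mul (by positivity), mul_assoc]

lemma step5 {s' t : ℝ} (hs' : 0 < s') (ht : 0 < t) (b : ℕ → ℝ) (hb : ∀ n, 0 ≤ b n)
    (hmono : Antitone b) (n : ℕ) :
    (⨆ k : ℕ, ENNReal.ofReal (((n:ℝ)+(k:ℝ)+1) ^ s') * ENNReal.ofReal (b (n+k))) ^ t
      ≤ ENNReal.ofReal (((n:ℝ)+1) ^ (s'*t)) * ENNReal.ofReal (b n) ^ t
        + ENNReal.ofReal (s'*t + s'*t * 2^(1-s'*t)) *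
          ∑' k : ℕ, ENNReal.ofReal (((n:ℝ)+(k:ℝ)+1) ^ (s'*t-1)) * ENNReal.ofReal (b (n+k)) ^ t := by
  set β : ℝ := s'*t with hβdef
  have hβ : 0 < β := _root_.mul_pos hs' ht
  set R : ℝ≥0∞ := ENNReal.ofReal (((n:ℝ)+1) ^ β) * ENNReal.ofReal (b n) ^ t
        + ENNReal.ofReal (β + β * 2^(1-β)) *
          ∑' k : ℕ, ENNReal.ofReal (((n:ℝ)+(k:ℝ)+1) ^ (β-1)) * ENNReal.ofReal (b (n+k)) ^ t
    with hRdef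
  have key : ∀ k : ℕ,
      (ENNReal.ofReal (((n:ℝ)+(k:ℝ)+1) ^ s') * ENNReal.ofReal (b (n+k))) ^ t ≤ R := by
    intro k
    have hx : (0:ℝ) < (n:ℝ)+(k:ℝ)+1 := by positivity
    have hpow : (ENNReal.ofReal (((n:ℝ)+(k:ℝ)+1) ^ s') * ENNReal.ofReal (b (n+k))) ^ t
        = ENNReal.ofReal (((n:ℝ)+(k:ℝ)+1) ^ β) * ENNReal.ofReal (b (n+k)) ^ t := by
      rw [ENNReal.mul_rpow_of_nonneg _ _ ht.le,
        ENNReal.ofReal_rpow_of_pos (Real.rpow_pos_of_pos hx _), ← Real.rpow_mul hx.le]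
    rw [hpow]
    have h' : ∑ j ∈ Finset.range k, (((n:ℝ)+(j:ℝ)+2) ^ β - ((n:ℝ)+(j:ℝ)+1) ^ β)
        = ((n:ℝ)+(k:ℝ)+1) ^ β - ((n:ℝ)+1) ^ β := by
      clear hpow hx
      induction k with
      | zero => push_cast; ring_nf
      | succ k ih =>
        rw [Finset.sum_range_succ, ih]
        push_cast
        ring_nf
    have hsum : ((n:ℝ)+(k:ℝ)+1) ^ β
        = ((n:ℝ)+1) ^ β + ∑ j ∈ Finset.range k,
            (((n:ℝ)+(j:ℝ)+2) ^ β - ((n:ℝ)+(j:ℝ)+1) ^ β) := by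
      rw [h']; ring
    have hΔnn : ∀ j : ℕ, (0:ℝ) ≤ ((n:ℝ)+(j:ℝ)+2) ^ β - ((n:ℝ)+(j:ℝ)+1) ^ β := by
      intro j
      have : ((n:ℝ)+(j:ℝ)+1) ^ β ≤ ((n:ℝ)+(j:ℝ)+2) ^ β :=
        Real.rpow_le_rpow (by positivity) (by linarith) hβ.le
      linarith
    have hofReal : ENNReal.ofReal (((n:ℝ)+(k:ℝ)+1) ^ β)
        = ENNReal.ofReal (((n:ℝ)+1) ^ β) + ∑ j ∈ Finset.range k,
            ENNReal.ofReal (((n:ℝ)+(j:ℝ)+2) ^ β - ((n:ℝ)+(j:ℝ)+1) ^ β) := by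
      rw [hsum, ENNReal.ofReal_add (by positivity) (Finset.sum_nonneg fun j _ => hΔnn j),
        ENNReal.ofReal_sum_of_nonneg (fun j _ => hΔnn j)]
    rw [hofReal, add_mul, Finset.sum_mul]
    have hBmono : ∀ {i j : ℕ}, i ≤ j → ENNReal.ofReal (b j) ^ t ≤ ENNReal.ofReal (b i) ^ t :=
      fun {i j} hij => ENNReal.rpow_le_rpow (ENNReal.ofReal_le_ofReal (hmono hij)) ht.le
    apply add_le_add
    · exact mul_le_mul_right (hBmono (Nat.le_add_right n k)) _
    · calc ∑ j ∈ Finset.range k,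
            ENNReal.ofReal (((n:ℝ)+(j:ℝ)+2) ^ β - ((n:ℝ)+(j:ℝ)+1) ^ β)
              * ENNReal.ofReal (b (n+k)) ^ t
          ≤ ∑ j ∈ Finset.range k,
            ENNReal.ofReal (β + β * 2^(1-β)) * (ENNReal.ofReal (((n:ℝ)+(j:ℝ)+2) ^ (β-1))
              * ENNReal.ofReal (b (n+(j+1))) ^ t) := by
            apply Finset.sum_le_sum
            intro j hj
            have hΔle : ((n:ℝ)+(j:ℝ)+2) ^ β - ((n:ℝ)+(j:ℝ)+1) ^ β
                ≤ (β + β * 2^(1-β)) * ((n:ℝ)+(j:ℝ)+2) ^ (β-1) := by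
              have hge : (1:ℝ) ≤ (n:ℝ)+(j:ℝ)+1 := by
                have h1 : (0:ℝ) ≤ (n:ℝ) := Nat.cast_nonneg n
                have h2 : (0:ℝ) ≤ (j:ℝ) := Nat.cast_nonneg j
                linarith
              have := L3 hβ (x := (n:ℝ)+(j:ℝ)+1) hge
              have e : (n:ℝ)+(j:ℝ)+1+1 = (n:ℝ)+(j:ℝ)+2 := by ring
              rw [e] at this
              exact this
            have hble : ENNReal.ofReal (b (n+k)) ^ t ≤ ENNReal.ofReal (b (n+(j+1))) ^ t :=
              hBmono (by have := Finset.mem_range.mp hj; omega)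
            calc ENNReal.ofReal (((n:ℝ)+(j:ℝ)+2) ^ β - ((n:ℝ)+(j:ℝ)+1) ^ β)
                  * ENNReal.ofReal (b (n+k)) ^ t
                ≤ ENNReal.ofReal ((β + β * 2^(1-β)) * ((n:ℝ)+(j:ℝ)+2) ^ (β-1))
                  * ENNReal.ofReal (b (n+(j+1))) ^ t :=
                  mul_le_mul (ENNReal.ofReal_le_ofReal hΔle) hble (by positivity) (by positivity)
              _ = ENNReal.ofReal (β + β * 2^(1-β)) * (ENNReal.ofReal (((n:ℝ)+(j:ℝ)+2) ^ (β-1))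
                  * ENNReal.ofReal (b (n+(j+1))) ^ t) := by
                  rw [ENNReal.ofReal_mul (by positivity), mul_assoc]
        _ = ENNReal.ofReal (β + β * 2^(1-β)) * ∑ j ∈ Finset.range k,
              (ENNReal.ofReal (((n:ℝ)+(j:ℝ)+2) ^ (β-1))
              * ENNReal.ofReal (b (n+(j+1))) ^ t) := by rw [Finset.mul_sum]
        _ ≤ ENNReal.ofReal (β + β * 2^(1-β)) *
              ∑' k' : ℕ, ENNReal.ofReal (((n:ℝ)+(k':ℝ)+1) ^ (β-1))
                * ENNReal.ofReal (b (n+k')) ^ t := by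
            apply mul_le_mul_right
            have hmap : ∑ j ∈ Finset.range k,
                (ENNReal.ofReal (((n:ℝ)+(j:ℝ)+2) ^ (β-1)) * ENNReal.ofReal (b (n+(j+1))) ^ t)
                = ∑ i ∈ (Finset.range k).map ⟨Nat.succ, Nat.succ_injective⟩,
                  (ENNReal.ofReal (((n:ℝ)+(i:ℝ)+1) ^ (β-1)) * ENNReal.ofReal (b (n+i)) ^ t) := by
              rw [Finset.sum_map]
              simp only [Function.Embedding.coeFn_mk]
              apply Finset.sum_congr rfl
              intro j _
              have e1 : (n:ℝ)+((Nat.succ j : ℕ):ℝ)+1 = (n:ℝ)+(j:ℝ)+2 := by push_cast; ring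
              have e2 : n + Nat.succ j = n + (j+1) := rfl
              rw [e1, e2]
            rw [hmap]
            exact ENNReal.sum_le_tsum _
  have key2 : (⨆ k : ℕ, ENNReal.ofReal (((n:ℝ)+(k:ℝ)+1) ^ s') * ENNReal.ofReal (b (n+k)))
      ≤ R ^ (1/t) := by
    apply iSup_le
    intro k
    have h1 := ENNReal.rpow_le_rpow (key k) (by positivity : (0:ℝ) ≤ 1/t)
    rwa [← ENNReal.rpow_mul, mul_one_div, div_self ht.ne', ENNReal.rpow_one] at h1
  have h2 := ENNReal.rpow_le_rpow key2 ht.le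
  rwa [← ENNReal.rpow_mul, one_div, inv_mul_cancel₀ ht.ne', ENNReal.rpow_one] at h2

lemma tsum_tail_swap (g H : ℕ → ℝ≥0∞) :
    ∑' n : ℕ, g n * ∑' k : ℕ, H (n+k)
      = ∑' m : ℕ, (∑ n ∈ Finset.range (m+1), g n) * H m := by
  have hinner : ∀ n : ℕ, g n * ∑' k : ℕ, H (n+k)
      = ∑' m : ℕ, (if n ≤ m then g n * H m else 0) := by
    intro n
    rw [← ENNReal.tsum_mul_left]
    have hinj : Function.Injective (fun k : ℕ => n + k) := fun x y h => Nat.add_left_cancel h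
    have := Function.Injective.tsum_eq (f := fun m => if n ≤ m then g n * H m else 0) hinj ?_
    · rw [← this]
      apply tsum_congr
      intro k
      exact (if_pos (Nat.le_add_right n k)).symm
    · intro m hm
      rcases le_or_gt n m with hle | hlt
      · exact ⟨m - n, by simp only []; omega⟩
      · exact absurd (if_neg (Nat.not_le.mpr hlt)) (Function.mem_support.mp hm)
  rw [tsum_congr hinner, ENNReal.tsum_comm]
  apply tsum_congr
  intro m
  rw [tsum_eq_sum (s := Finset.range (m+1)) (by
    intro n hn
    rw [if_neg]
    simp only [Finset.mem_range] at hn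
    omega)]
  rw [Finset.sum_mul]
  apply Finset.sum_congr rfl
  intro n hn
  rw [if_pos (by simpa using Nat.lt_succ_iff.mp (Finset.mem_range.mp hn))]

lemma hardy_swap {γ : ℝ} (hγ : 0 < γ) (H : ℕ → ℝ≥0∞) :
    ∑' n : ℕ, ENNReal.ofReal (((n:ℝ)+1)^(γ-1)) * ∑' k : ℕ, H (n+k)
      ≤ ENNReal.ofReal (1+1/γ) * ∑' m : ℕ, ENNReal.ofReal (((m:ℝ)+1)^γ) * H m := by
  rw [tsum_tail_swap, ← ENNReal.tsum_mul_left]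
  apply ENNReal.tsum_le_tsum
  intro m
  rw [← mul_assoc]
  apply mul_le_mul_left
  calc ∑ n ∈ Finset.range (m+1), ENNReal.ofReal (((n:ℝ)+1)^(γ-1))
      = ENNReal.ofReal (∑ n ∈ Finset.range (m+1), ((n:ℝ)+1)^(γ-1)) :=
        (ENNReal.ofReal_sum_of_nonneg (fun n _ => by positivity)).symm
    _ ≤ ENNReal.ofReal ((1 + 1/γ) * ((m:ℝ)+1) ^ γ) := ENNReal.ofReal_le_ofReal (L2 hγ m)
    _ = ENNReal.ofReal (1 + 1/γ) * ENNReal.ofReal (((m:ℝ)+1) ^ γ) :=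
        ENNReal.ofReal_mul (by positivity)

lemma wmul {z e1 e2 : ℝ} (hz : 0 < z) :
    ENNReal.ofReal (z^e1) * ENNReal.ofReal (z^e2) = ENNReal.ofReal (z^(e1+e2)) := by
  rw [← ENNReal.ofReal_mul (by positivity), ← Real.rpow_add hz]

lemma termpow {z e t : ℝ} (hz : 0 < z) (ht : 0 ≤ t) (X : ℝ≥0∞) :
    (ENNReal.ofReal (z ^ e) * X) ^ t = ENNReal.ofReal (z ^ (e*t)) * X ^ t := by
  rw [ENNReal.mul_rpow_of_nonneg _ _ ht,
    ENNReal.ofReal_rpow_of_pos (Real.rpow_pos_of_pos hz _), ← Real.rpow_mul hz.le]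

end discreteHardyAux

/-- Discrete Hardy inequality: if decreasing nonnegative sequences `(a_n), (b_n)` (indexed from 1)
satisfy `a_n ≤ C n^{-r} (Σ_{k=n}^∞ k^{rμ-1} b_k^μ)^{1/μ}`, then for `0 < q ≤ ∞` and `s > r`,
`‖a‖_{ℓ_{1/s,q}} ≤ C' ‖b‖_{ℓ_{1/s,q}}` with `C'` depending only on `μ, s, r, C` (and `q`). -/
theorem discrete_hardy (μ r C : ℝ) (hμ : 0 < μ) (hr : 0 < r) (hC : 0 < C)
    (s : ℝ) (hs : r < s) (q : ℝ≥0∞) (hq : 0 < q) :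
    ∃ C' : ℝ, 0 < C' ∧ ∀ a b : ℕ → ℝ,
      (∀ n, 0 ≤ a n) → (∀ n, 0 ≤ b n) → Antitone a → Antitone b →
      (∀ n : ℕ, ENNReal.ofReal (a n) ≤
        ENNReal.ofReal (C * ((n : ℝ) + 1) ^ (-r)) *
          (∑' k : ℕ, ENNReal.ofReal
            (((n : ℝ) + (k : ℝ) + 1) ^ (r * μ - 1) * b (n + k) ^ μ)) ^ (1 / μ)) →
      lorentzNorm (1 / s) q (fun n => ENNReal.ofReal (a n)) ≤
        ENNReal.ofReal C' * lorentzNorm (1 / s) q (fun n => ENNReal.ofReal (b n)) := by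
  have hs0 : 0 < s := hr.trans hs
  have hss : 1 / (1 / s) = s := one_div_one_div s
  by_cases hqtop : q = ∞
  · -- q = ∞
    subst hqtop
    refine ⟨C * ((1 + 1/((s-r)*μ)) ^ (1/μ)), by
      have hx : 0 < (s-r)*μ := _root_.mul_pos (by linarith) hμ
      positivity, ?_⟩
    intro a b ha hb hamono hbmono hyp
    simp only [lorentzNorm, if_pos rfl, hss]
    apply iSup_le
    intro n
    have h2 := step2 (s' := s) hμ hr hC hs b hb (fun n => ENNReal.ofReal (a n)) hyp n
    have hn1 : (0:ℝ) < (n:ℝ)+1 := by positivity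
    calc ENNReal.ofReal (((n:ℝ)+1) ^ s) * ENNReal.ofReal (a n)
        ≤ ENNReal.ofReal (((n:ℝ)+1) ^ s) *
          (ENNReal.ofReal (C * ((1 + 1/((s-r)*μ)) ^ (1/μ))) *
            (ENNReal.ofReal (((n:ℝ)+1) ^ (-s)) *
              ⨆ k : ℕ, ENNReal.ofReal (((n:ℝ)+(k:ℝ)+1) ^ s) * ENNReal.ofReal (b (n+k)))) :=
          mul_le_mul_right h2 _
      _ = ENNReal.ofReal (C * ((1 + 1/((s-r)*μ)) ^ (1/μ))) *
            ((ENNReal.ofReal (((n:ℝ)+1) ^ s) * ENNReal.ofReal (((n:ℝ)+1) ^ (-s))) *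
              ⨆ k : ℕ, ENNReal.ofReal (((n:ℝ)+(k:ℝ)+1) ^ s) * ENNReal.ofReal (b (n+k))) := by
          ring
      _ = ENNReal.ofReal (C * ((1 + 1/((s-r)*μ)) ^ (1/μ))) *
            (⨆ k : ℕ, ENNReal.ofReal (((n:ℝ)+(k:ℝ)+1) ^ s) * ENNReal.ofReal (b (n+k))) := by
          rw [wmul hn1]
          norm_num
      _ ≤ ENNReal.ofReal (C * ((1 + 1/((s-r)*μ)) ^ (1/μ))) *
            (⨆ m : ℕ, ENNReal.ofReal (((m:ℝ)+1) ^ s) * ENNReal.ofReal (b m)) := by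
          apply mul_le_mul_right
          apply iSup_le
          intro k
          have e : ((n:ℝ)+(k:ℝ)+1) = (((n+k:ℕ):ℝ)+1) := by push_cast; ring
          rw [e]
          exact le_iSup (fun m : ℕ => ENNReal.ofReal (((m:ℝ)+1) ^ s) * ENNReal.ofReal (b m))
            (n+k)
  · -- q < ∞
    have hq0 : q ≠ 0 := hq.ne'
    set t : ℝ := q.toReal with htdef
    have ht : 0 < t := ENNReal.toReal_pos hq0 hqtop
    set s' : ℝ := (r+s)/2 with hs'def
    have hrs' : r < s' := by rw [hs'def]; linarith
    have hs'0 : 0 < s' := hr.trans hrs'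
    set δ : ℝ := (s-r)/2 with hδdef
    have hδ : 0 < δ := by rw [hδdef]; linarith
    have hsum : s = s' + δ := by rw [hs'def, hδdef]; ring
    set c₂ : ℝ := C * ((1 + 1/((s'-r)*μ)) ^ (1/μ)) with hc₂def
    have hc₂ : 0 < c₂ := by
      rw [hc₂def]
      have : 0 < (s'-r)*μ := by apply _root_.mul_pos; linarith; exact hμ
      positivity
    set c₃ : ℝ := s'*t + s'*t * 2^(1-s'*t) with hc₃def
    have hc₃ : 0 < c₃ := by rw [hc₃def]; positivity
    set c₄ : ℝ := 1 + 1/(δ*t) with hc₄def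
    have hδt : 0 < δ*t := _root_.mul_pos hδ ht
    have hc₄ : 0 < c₄ := by rw [hc₄def]; positivity
    set κ : ℝ := c₂^t * (1 + c₃*c₄) with hκdef
    have hκ : 0 < κ := by rw [hκdef]; positivity
    refine ⟨κ ^ (1/t), by positivity, ?_⟩
    intro a b ha hb hamono hbmono hyp
    simp only [lorentzNorm, if_neg hqtop, hss, ← htdef]
    have he : (s - 1/t) * t = s*t - 1 := by field_simp
    -- sum forms
    have hSA : (∑' n : ℕ, (ENNReal.ofReal (((n:ℝ)+1) ^ (s - 1/t)) * ENNReal.ofReal (a n)) ^ t)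
        = ∑' n : ℕ, ENNReal.ofReal (((n:ℝ)+1) ^ (s*t-1)) * ENNReal.ofReal (a n) ^ t := by
      apply tsum_congr
      intro n
      rw [termpow (by positivity) ht.le, he]
    have hSB : (∑' n : ℕ, (ENNReal.ofReal (((n:ℝ)+1) ^ (s - 1/t)) * ENNReal.ofReal (b n)) ^ t)
        = ∑' n : ℕ, ENNReal.ofReal (((n:ℝ)+1) ^ (s*t-1)) * ENNReal.ofReal (b n) ^ t := by
      apply tsum_congr
      intro n
      rw [termpow (by positivity) ht.le, he]
    set Bt : ℕ → ℝ≥0∞ := fun m => ENNReal.ofReal (b m) ^ t with hBtdef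
    set SB : ℝ≥0∞ := ∑' m : ℕ, ENNReal.ofReal (((m:ℝ)+1) ^ (s*t-1)) * Bt m with hSBdef
    set H : ℕ → ℝ≥0∞ := fun m => ENNReal.ofReal (((m:ℝ)+1) ^ (s'*t-1)) * Bt m with hHdef
    -- pointwise bound
    have hpoint : ∀ n : ℕ, ENNReal.ofReal (((n:ℝ)+1) ^ (s*t-1)) * ENNReal.ofReal (a n) ^ t
        ≤ ENNReal.ofReal (c₂^t) * (ENNReal.ofReal (((n:ℝ)+1) ^ (s*t-1)) * Bt n)
          + ENNReal.ofReal (c₂^t) * ENNReal.ofReal c₃ *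
            (ENNReal.ofReal (((n:ℝ)+1) ^ (δ*t-1)) * ∑' k : ℕ, H (n+k)) := by
      intro n
      have hn1 : (0:ℝ) < (n:ℝ)+1 := by positivity
      have h2 := step2 (s' := s') hμ hr hC hrs' b hb (fun n => ENNReal.ofReal (a n)) hyp n
      have h2t : ENNReal.ofReal (a n) ^ t
          ≤ ENNReal.ofReal (c₂^t) * (ENNReal.ofReal (((n:ℝ)+1) ^ (-s'*t)) *
            (⨆ k : ℕ, ENNReal.ofReal (((n:ℝ)+(k:ℝ)+1) ^ s') * ENNReal.ofReal (b (n+k))) ^ t) := by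
        calc ENNReal.ofReal (a n) ^ t
            ≤ (ENNReal.ofReal c₂ *
              (ENNReal.ofReal (((n:ℝ)+1) ^ (-s')) *
                ⨆ k : ℕ, ENNReal.ofReal (((n:ℝ)+(k:ℝ)+1) ^ s') * ENNReal.ofReal (b (n+k)))) ^ t :=
              ENNReal.rpow_le_rpow h2 ht.le
          _ = _ := by
              rw [ENNReal.mul_rpow_of_nonneg _ _ ht.le, ENNReal.mul_rpow_of_nonneg _ _ ht.le,
                ENNReal.ofReal_rpow_of_pos hc₂,
                ENNReal.ofReal_rpow_of_pos (Real.rpow_pos_of_pos hn1 _), ← Real.rpow_mul hn1.le]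
      have h5 := step5 hs'0 ht b hb hbmono n
      have h5' : (⨆ k : ℕ, ENNReal.ofReal (((n:ℝ)+(k:ℝ)+1) ^ s') * ENNReal.ofReal (b (n+k))) ^ t
          ≤ ENNReal.ofReal (((n:ℝ)+1) ^ (s'*t)) * Bt n + ENNReal.ofReal c₃ * ∑' k : ℕ, H (n+k) := by
        refine h5.trans (le_of_eq ?_)
        congr 1
        rw [hc₃def]
        congr 1
        apply tsum_congr
        intro k
        have e : ((n:ℝ)+(k:ℝ)+1) = (((n+k:ℕ):ℝ)+1) := by push_cast; ring
        rw [hHdef]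
        simp only []
        rw [e]
      calc ENNReal.ofReal (((n:ℝ)+1) ^ (s*t-1)) * ENNReal.ofReal (a n) ^ t
          ≤ ENNReal.ofReal (((n:ℝ)+1) ^ (s*t-1)) *
            (ENNReal.ofReal (c₂^t) * (ENNReal.ofReal (((n:ℝ)+1) ^ (-s'*t)) *
              ((ENNReal.ofReal (((n:ℝ)+1) ^ (s'*t)) * Bt n)
                + ENNReal.ofReal c₃ * ∑' k : ℕ, H (n+k)))) := by
            apply mul_le_mul_right
            exact h2t.trans (mul_le_mul_right (mul_le_mul_right h5' _) _)
        _ = ENNReal.ofReal (c₂^t) *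
              ((ENNReal.ofReal (((n:ℝ)+1) ^ (s*t-1)) * ENNReal.ofReal (((n:ℝ)+1) ^ (-s'*t))
                * ENNReal.ofReal (((n:ℝ)+1) ^ (s'*t))) * Bt n)
            + ENNReal.ofReal (c₂^t) * ENNReal.ofReal c₃ *
              ((ENNReal.ofReal (((n:ℝ)+1) ^ (s*t-1)) * ENNReal.ofReal (((n:ℝ)+1) ^ (-s'*t)))
                * ∑' k : ℕ, H (n+k)) := by
            ring
        _ = ENNReal.ofReal (c₂^t) * (ENNReal.ofReal (((n:ℝ)+1) ^ (s*t-1)) * Bt n)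
            + ENNReal.ofReal (c₂^t) * ENNReal.ofReal c₃ *
              (ENNReal.ofReal (((n:ℝ)+1) ^ (δ*t-1)) * ∑' k : ℕ, H (n+k)) := by
            rw [wmul hn1, wmul hn1, hsum]
            ring_nf
    -- sum the pointwise bound
    have hmain : (∑' n : ℕ, ENNReal.ofReal (((n:ℝ)+1) ^ (s*t-1)) * ENNReal.ofReal (a n) ^ t)
        ≤ ENNReal.ofReal κ * SB := by
      calc (∑' n : ℕ, ENNReal.ofReal (((n:ℝ)+1) ^ (s*t-1)) * ENNReal.ofReal (a n) ^ t)
          ≤ ∑' n : ℕ, (ENNReal.ofReal (c₂^t) * (ENNReal.ofReal (((n:ℝ)+1) ^ (s*t-1)) * Bt n)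
              + ENNReal.ofReal (c₂^t) * ENNReal.ofReal c₃ *
                (ENNReal.ofReal (((n:ℝ)+1) ^ (δ*t-1)) * ∑' k : ℕ, H (n+k))) :=
            ENNReal.tsum_le_tsum hpoint
        _ = ENNReal.ofReal (c₂^t) * SB
            + ENNReal.ofReal (c₂^t) * ENNReal.ofReal c₃ *
              ∑' n : ℕ, ENNReal.ofReal (((n:ℝ)+1) ^ (δ*t-1)) * ∑' k : ℕ, H (n+k) := by
            rw [ENNReal.tsum_add, ENNReal.tsum_mul_left, ENNReal.tsum_mul_left, hSBdef]
        _ ≤ ENNReal.ofReal (c₂^t) * SB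
            + ENNReal.ofReal (c₂^t) * ENNReal.ofReal c₃ *
              (ENNReal.ofReal c₄ * ∑' m : ℕ, ENNReal.ofReal (((m:ℝ)+1) ^ (δ*t)) * H m) := by
            apply add_le_add_right
            apply mul_le_mul_right
            have := hardy_swap hδt H
            rw [hc₄def]
            exact this
        _ = ENNReal.ofReal (c₂^t) * SB
            + ENNReal.ofReal (c₂^t) * ENNReal.ofReal c₃ * (ENNReal.ofReal c₄ * SB) := by
            congr 2
            rw [hSBdef]
            congr 1
            apply tsum_congr
            intro m
            rw [hHdef]
            simp only []
            rw [← mul_assoc, wmul (by positivity)]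
            congr 2
            rw [hsum]; ring
        _ = ENNReal.ofReal κ * SB := by
            rw [hκdef, ENNReal.ofReal_mul (Real.rpow_nonneg hc₂.le t),
              ENNReal.ofReal_add zero_le_one (mul_nonneg hc₃.le hc₄.le),
              ENNReal.ofReal_mul hc₃.le, ENNReal.ofReal_one]
            ring
    -- conclude
    rw [hSA, hSB]
    calc (∑' n : ℕ, ENNReal.ofReal (((n:ℝ)+1) ^ (s*t-1)) * ENNReal.ofReal (a n) ^ t) ^ (1/t)
        ≤ (ENNReal.ofReal κ * SB) ^ (1/t) := ENNReal.rpow_le_rpow hmain (by positivity)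
      _ = ENNReal.ofReal (κ ^ (1/t)) *
          (∑' n : ℕ, ENNReal.ofReal (((n:ℝ)+1) ^ (s*t-1)) * ENNReal.ofReal (b n) ^ t) ^ (1/t) := by
          rw [ENNReal.mul_rpow_of_nonneg _ _ (by positivity), ENNReal.ofReal_rpow_of_pos hκ,
            hSBdef]
end
end

section
/- If (b_n)_{n≥0} is a nonnegative decreasing sequence with (b_n) ∈ ℓ_p for 0 < p < 2, and E_n = (Σ_{k=n+1}^∞ b_k²)^{1/2}, then ‖(E_n/(n+1)^{1/2})_{n≥0}‖_{ℓ_{p,p}} ≤ C_p ‖(b_n)‖_{ℓ_p}; conversely, n^{1/2} b_{2n} ≤ E_{n−1} for all n ≥ 1. -/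
open MeasureTheory ENNReal

noncomputable section

lemma aux_rpow_sum_le {q : ℝ} (hq0 : 0 < q) (hq1 : q ≤ 1) {ι : Type*} (s : Finset ι)
    (f : ι → ℝ≥0∞) : (∑ i ∈ s, f i) ^ q ≤ ∑ i ∈ s, f i ^ q := by
  induction s using Finset.cons_induction with
  | empty => simp [ENNReal.zero_rpow_of_pos hq0]
  | cons a s has ih =>
      rw [Finset.sum_cons, Finset.sum_cons]
      exact (ENNReal.rpow_add_le_add_rpow _ _ hq0.le hq1).trans (add_le_add le_rfl ih)

lemma aux_rpow_tsum_le {q : ℝ} (hq0 : 0 < q) (hq1 : q ≤ 1) (f : ℕ → ℝ≥0∞) :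
    (∑' n, f n) ^ q ≤ ∑' n, f n ^ q := by
  have key : ∑' n, f n ≤ (∑' n, f n ^ q) ^ (1 / q) := by
    rw [ENNReal.tsum_eq_iSup_sum]
    refine iSup_le fun s => ?_
    have h1 : (∑ i ∈ s, f i) ^ q ≤ ∑' n, f n ^ q :=
      (aux_rpow_sum_le hq0 hq1 s f).trans (ENNReal.sum_le_tsum s)
    have := ENNReal.rpow_le_rpow h1 (by positivity : (0:ℝ) ≤ 1 / q)
    rwa [← ENNReal.rpow_mul, mul_one_div, div_self hq0.ne', ENNReal.rpow_one] at this
  calc (∑' n, f n) ^ q ≤ ((∑' n, f n ^ q) ^ (1 / q)) ^ q := ENNReal.rpow_le_rpow key hq0.le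
    _ = ∑' n, f n ^ q := by
        rw [← ENNReal.rpow_mul, one_div, inv_mul_cancel₀ hq0.ne', ENNReal.rpow_one]

lemma aux_tail (B : ℕ → ℝ≥0∞) (hB : Antitone B) (n : ℕ) :
    (∑' k : ℕ, B (n + 1 + k) ^ 2) ≤
      ∑' j : ℕ, ((2 ^ j * (n + 1) : ℕ) : ℝ≥0∞) * B (2 ^ j * (n + 1)) ^ 2 := by
  set g : ℕ × ℕ → ℝ≥0∞ := fun q =>
    if q.2 < 2 ^ q.1 * (n + 1) then B (2 ^ q.1 * (n + 1)) ^ 2 else 0 with hg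
  set i : ℕ → ℕ × ℕ := fun k =>
    (Nat.log 2 ((n + 1 + k) / (n + 1)), (n + 1 + k) - 2 ^ (Nat.log 2 ((n + 1 + k) / (n + 1))) * (n + 1)) with hi
  have hdiv : ∀ k : ℕ, (n + 1 + k) / (n + 1) ≠ 0 := by
    intro k
    have : 1 ≤ (n + 1 + k) / (n + 1) := (Nat.one_le_div_iff (by omega)).mpr (by omega)
    omega
  have hlow : ∀ k : ℕ, 2 ^ (i k).1 * (n + 1) ≤ n + 1 + k := by
    intro k
    calc 2 ^ (i k).1 * (n + 1) ≤ ((n + 1 + k) / (n + 1)) * (n + 1) :=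
          Nat.mul_le_mul_right _ (Nat.pow_log_le_self 2 (hdiv k))
      _ ≤ n + 1 + k := Nat.div_mul_le_self _ _
  have hhigh : ∀ k : ℕ, n + 1 + k < 2 ^ ((i k).1 + 1) * (n + 1) := by
    intro k
    have h1 : (n + 1 + k) / (n + 1) < 2 ^ ((i k).1 + 1) :=
      Nat.lt_pow_succ_log_self (by norm_num) _
    have h2 : (n + 1) * ((n + 1 + k) / (n + 1)) + (n + 1 + k) % (n + 1) = n + 1 + k :=
      Nat.div_add_mod _ _
    have h3 : (n + 1 + k) % (n + 1) < n + 1 := Nat.mod_lt _ (by omega)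
    calc n + 1 + k < (n + 1) * ((n + 1 + k) / (n + 1) + 1) := by
          rw [Nat.mul_add, Nat.mul_one]; omega
      _ = ((n + 1 + k) / (n + 1) + 1) * (n + 1) := Nat.mul_comm _ _
      _ ≤ 2 ^ ((i k).1 + 1) * (n + 1) := Nat.mul_le_mul_right _ h1
  have hr : ∀ k : ℕ, (i k).2 < 2 ^ (i k).1 * (n + 1) := by
    intro k
    have h1 := hlow k; have h2 := hhigh k
    have hp : 2 ^ ((i k).1 + 1) * (n + 1) = 2 ^ (i k).1 * (n + 1) + 2 ^ (i k).1 * (n + 1) := by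
      ring
    rw [hp] at h2
    simp only [hi] at h1 h2 ⊢
    omega
  have hinj : Function.Injective i := by
    intro k k' h
    have h1 := hlow k; have h2 := hlow k'
    have e1 : (i k).1 = (i k').1 := by rw [h]
    have e2 : (i k).2 = (i k').2 := by rw [h]
    simp only [hi] at h1 h2 e1 e2
    have e1' : 2 ^ Nat.log 2 ((n + 1 + k) / (n + 1)) * (n + 1)
        = 2 ^ Nat.log 2 ((n + 1 + k') / (n + 1)) * (n + 1) := by rw [e1]
    omega
  have hle : ∀ k : ℕ, B (n + 1 + k) ^ 2 ≤ g (i k) := by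
    intro k
    rw [hg]
    simp only [hr k, if_pos]
    exact pow_le_pow_left' (hB (hlow k)) 2
  calc (∑' k : ℕ, B (n + 1 + k) ^ 2) ≤ ∑' k : ℕ, g (i k) := ENNReal.tsum_le_tsum hle
    _ ≤ ∑' q : ℕ × ℕ, g q := ENNReal.tsum_comp_le_tsum_of_injective hinj g
    _ = ∑' j : ℕ, ∑' r : ℕ, (if r < 2 ^ j * (n + 1) then B (2 ^ j * (n + 1)) ^ 2 else 0) :=
        ENNReal.tsum_prod (f := fun j r => if r < 2 ^ j * (n + 1) then B (2 ^ j * (n + 1)) ^ 2 else 0)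
    _ = ∑' j : ℕ, ((2 ^ j * (n + 1) : ℕ) : ℝ≥0∞) * B (2 ^ j * (n + 1)) ^ 2 := by
        refine tsum_congr fun j => ?_
        rw [tsum_eq_sum (s := Finset.range (2 ^ j * (n + 1)))
          (fun r hr => by simp [Finset.mem_range.not.mp hr])]
        rw [Finset.sum_ite_of_true (by intro r hr; exact Finset.mem_range.mp hr)]
        simp [nsmul_eq_mul]

lemma aux_blocks (B : ℕ → ℝ≥0∞) (hB : Antitone B) {p : ℝ} (hp0 : 0 < p) (j : ℕ) :
    (2 ^ j : ℝ≥0∞) * ∑' n : ℕ, B (2 ^ j * (n + 1)) ^ p ≤ ∑' m : ℕ, B m ^ p := by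
  set g : ℕ → ℝ≥0∞ := fun m => B (m + 1) ^ p with hgdef
  have hsplit : ∀ N : ℕ, ∑ m ∈ Finset.range (2 ^ j * N), g m
      = ∑ n ∈ Finset.range N, ∑ r ∈ Finset.range (2 ^ j), g (2 ^ j * n + r) := by
    intro N
    induction N with
    | zero => simp
    | succ N ih => rw [Nat.mul_succ, Finset.sum_range_add, ih, Finset.sum_range_succ]
  rw [← ENNReal.tsum_mul_left]
  refine ENNReal.tsum_le_of_sum_range_le fun N => ?_
  have step1 : ∀ n : ℕ, (2 ^ j : ℝ≥0∞) * B (2 ^ j * (n + 1)) ^ p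
      ≤ ∑ r ∈ Finset.range (2 ^ j), g (2 ^ j * n + r) := by
    intro n
    have : ∀ r ∈ Finset.range (2 ^ j), B (2 ^ j * (n + 1)) ^ p ≤ g (2 ^ j * n + r) := by
      intro r hr
      have hr' : r < 2 ^ j := Finset.mem_range.mp hr
      exact ENNReal.rpow_le_rpow (hB (by rw [Nat.mul_succ]; omega)) hp0.le
    calc (2 ^ j : ℝ≥0∞) * B (2 ^ j * (n + 1)) ^ p
        = ∑ _r ∈ Finset.range (2 ^ j), B (2 ^ j * (n + 1)) ^ p := by
          simp [nsmul_eq_mul]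
      _ ≤ _ := Finset.sum_le_sum this
  calc ∑ n ∈ Finset.range N, (2 ^ j : ℝ≥0∞) * B (2 ^ j * (n + 1)) ^ p
      ≤ ∑ n ∈ Finset.range N, ∑ r ∈ Finset.range (2 ^ j), g (2 ^ j * n + r) :=
        Finset.sum_le_sum fun n _ => step1 n
    _ = ∑ m ∈ Finset.range (2 ^ j * N), g m := (hsplit N).symm
    _ ≤ ∑' m : ℕ, g m := ENNReal.sum_le_tsum _
    _ ≤ ∑' m : ℕ, B m ^ p :=
        ENNReal.tsum_comp_le_tsum_of_injective Nat.succ_injective (fun m => B m ^ p)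

lemma aux_key {p : ℝ} (hp0 : 0 < p) (hp2 : p ≤ 2) (B : ℕ → ℝ≥0∞) (hB : Antitone B) :
    ∑' n : ℕ, ((∑' k : ℕ, B (n + 1 + k) ^ 2) ^ (1 / 2 : ℝ)
        / ((n : ℝ≥0∞) + 1) ^ (1 / 2 : ℝ)) ^ p
      ≤ (1 - (2 : ℝ≥0∞) ^ (p / 2 - 1))⁻¹ * ∑' m : ℕ, B m ^ p := by
  have hq0 : 0 < p / 2 := by linarith
  set S : ℝ≥0∞ := ∑' m : ℕ, B m ^ p with hS
  have hc2 : ∀ c : ℝ≥0∞, (c ^ 2) ^ (p / 2 : ℝ) = c ^ p := by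
    intro c
    rw [← ENNReal.rpow_natCast c 2, ← ENNReal.rpow_mul,
      show ((2 : ℕ) : ℝ) * (p / 2) = p by push_cast; ring]
  have h2j0 : ∀ j : ℕ, ((2 : ℝ≥0∞) ^ j) ≠ 0 := fun j => pow_ne_zero j two_ne_zero
  have h2jt : ∀ j : ℕ, ((2 : ℝ≥0∞) ^ j) ≠ ∞ := fun j => ENNReal.pow_ne_top ofNat_ne_top
  have main : ∀ n : ℕ, ((∑' k : ℕ, B (n + 1 + k) ^ 2) ^ (1 / 2 : ℝ)
      / ((n : ℝ≥0∞) + 1) ^ (1 / 2 : ℝ)) ^ p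
      ≤ ∑' j : ℕ, ((2 : ℝ≥0∞) ^ j) ^ (p / 2 : ℝ) * B (2 ^ j * (n + 1)) ^ p := by
    intro n
    set N : ℝ≥0∞ := (n : ℝ≥0∞) + 1 with hN
    have hNt' : N ≠ ∞ := by
      rw [hN]; exact ENNReal.add_ne_top.mpr ⟨ENNReal.natCast_ne_top n, ENNReal.one_ne_top⟩
    have hN1 : (1 : ℝ≥0∞) ≤ N := le_add_self
    have hN0 : N ^ (p / 2 : ℝ) ≠ 0 :=
      (ENNReal.rpow_pos (zero_lt_one.trans_le hN1) hNt').ne'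
    have hNt : N ^ (p / 2 : ℝ) ≠ ∞ := ENNReal.rpow_ne_top_of_nonneg hq0.le hNt'
    have step1 : (∑' k : ℕ, B (n + 1 + k) ^ 2) ^ (p / 2 : ℝ)
        ≤ N ^ (p / 2 : ℝ) * ∑' j : ℕ, ((2 : ℝ≥0∞) ^ j) ^ (p / 2 : ℝ) * B (2 ^ j * (n + 1)) ^ p := by
      calc (∑' k : ℕ, B (n + 1 + k) ^ 2) ^ (p / 2 : ℝ)
          ≤ (∑' j : ℕ, ((2 ^ j * (n + 1) : ℕ) : ℝ≥0∞) * B (2 ^ j * (n + 1)) ^ 2) ^ (p / 2 : ℝ) :=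
            ENNReal.rpow_le_rpow (aux_tail B hB n) hq0.le
        _ ≤ ∑' j : ℕ, (((2 ^ j * (n + 1) : ℕ) : ℝ≥0∞) * B (2 ^ j * (n + 1)) ^ 2) ^ (p / 2 : ℝ) :=
            aux_rpow_tsum_le hq0 (by linarith) _
        _ = ∑' j : ℕ, N ^ (p / 2 : ℝ) * (((2 : ℝ≥0∞) ^ j) ^ (p / 2 : ℝ) * B (2 ^ j * (n + 1)) ^ p) := by
            refine tsum_congr fun j => ?_
            have hcast : ((2 ^ j * (n + 1) : ℕ) : ℝ≥0∞) = (2 : ℝ≥0∞) ^ j * N := by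
              push_cast [hN]; ring
            rw [hcast, ENNReal.mul_rpow_of_nonneg _ _ hq0.le,
              ENNReal.mul_rpow_of_nonneg _ _ hq0.le, hc2]
            ring
        _ = _ := ENNReal.tsum_mul_left
    have hxp : ((∑' k : ℕ, B (n + 1 + k) ^ 2) ^ (1 / 2 : ℝ) / N ^ (1 / 2 : ℝ)) ^ p
        = (∑' k : ℕ, B (n + 1 + k) ^ 2) ^ (p / 2 : ℝ) / N ^ (p / 2 : ℝ) := by
      rw [ENNReal.div_rpow_of_nonneg _ _ hp0.le, ← ENNReal.rpow_mul, ← ENNReal.rpow_mul,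
        show (1 / 2 * p : ℝ) = p / 2 by ring]
    rw [hxp]
    calc (∑' k : ℕ, B (n + 1 + k) ^ 2) ^ (p / 2 : ℝ) / N ^ (p / 2 : ℝ)
        ≤ (N ^ (p / 2 : ℝ) * ∑' j : ℕ, ((2 : ℝ≥0∞) ^ j) ^ (p / 2 : ℝ) * B (2 ^ j * (n + 1)) ^ p)
            / N ^ (p / 2 : ℝ) := ENNReal.div_le_div_right step1 _
      _ = ∑' j : ℕ, ((2 : ℝ≥0∞) ^ j) ^ (p / 2 : ℝ) * B (2 ^ j * (n + 1)) ^ p := by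
          rw [mul_comm, mul_div_assoc, ENNReal.div_self hN0 hNt, mul_one]
  calc ∑' n : ℕ, ((∑' k : ℕ, B (n + 1 + k) ^ 2) ^ (1 / 2 : ℝ)
        / ((n : ℝ≥0∞) + 1) ^ (1 / 2 : ℝ)) ^ p
      ≤ ∑' n : ℕ, ∑' j : ℕ, ((2 : ℝ≥0∞) ^ j) ^ (p / 2 : ℝ) * B (2 ^ j * (n + 1)) ^ p :=
        ENNReal.tsum_le_tsum main
    _ = ∑' j : ℕ, ∑' n : ℕ, ((2 : ℝ≥0∞) ^ j) ^ (p / 2 : ℝ) * B (2 ^ j * (n + 1)) ^ p :=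
        ENNReal.tsum_comm
    _ = ∑' j : ℕ, ((2 : ℝ≥0∞) ^ j) ^ (p / 2 : ℝ) * ∑' n : ℕ, B (2 ^ j * (n + 1)) ^ p :=
        tsum_congr fun j => ENNReal.tsum_mul_left
    _ ≤ ∑' j : ℕ, ((2 : ℝ≥0∞) ^ j) ^ (p / 2 : ℝ) * (((2 : ℝ≥0∞) ^ j)⁻¹ * S) := by
        refine ENNReal.tsum_le_tsum fun j => mul_le_mul_of_nonneg_left ?_ zero_le
        calc ∑' n : ℕ, B (2 ^ j * (n + 1)) ^ p
            = ((2 : ℝ≥0∞) ^ j)⁻¹ * ((2 : ℝ≥0∞) ^ j * ∑' n : ℕ, B (2 ^ j * (n + 1)) ^ p) := by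
              rw [← mul_assoc, ENNReal.inv_mul_cancel (h2j0 j) (h2jt j), one_mul]
          _ ≤ ((2 : ℝ≥0∞) ^ j)⁻¹ * S := mul_le_mul_of_nonneg_left (aux_blocks B hB hp0 j) zero_le
    _ = ∑' j : ℕ, ((2 : ℝ≥0∞) ^ (p / 2 - 1 : ℝ)) ^ j * S := by
        refine tsum_congr fun j => ?_
        rw [← mul_assoc]
        congr 1
        rw [← ENNReal.rpow_neg_one ((2 : ℝ≥0∞) ^ j),
          ← ENNReal.rpow_add _ _ (h2j0 j) (h2jt j),
          show (p / 2 + -1 : ℝ) = p / 2 - 1 by ring,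
          ← ENNReal.rpow_natCast_mul 2 j (p / 2 - 1), mul_comm ((j : ℝ)) (p / 2 - 1),
          ENNReal.rpow_mul, ENNReal.rpow_natCast]
    _ = (∑' j : ℕ, ((2 : ℝ≥0∞) ^ (p / 2 - 1 : ℝ)) ^ j) * S := ENNReal.tsum_mul_right
    _ = (1 - (2 : ℝ≥0∞) ^ (p / 2 - 1 : ℝ))⁻¹ * S := by rw [ENNReal.tsum_geometric]

/-- For nonnegative decreasing `(b_n)_{n≥0} ∈ ℓ_p`, `0 < p < 2`, and
`E_n = (Σ_{k=n+1}^∞ b_k²)^{1/2}`: `‖(E_n/(n+1)^{1/2})_n‖_{ℓ_{p,p}} ≤ C_p ‖b‖_{ℓ_p}`;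
conversely `n^{1/2} b_{2n} ≤ E_{n-1}` for all `n ≥ 1`. -/
theorem tail_lorentz_bound_and_converse (p : ℝ) (hp0 : 0 < p) (hp2 : p < 2) :
    (∃ C : ℝ, 0 < C ∧ ∀ b : ℕ → ℝ, (∀ n, 0 ≤ b n) → Antitone b → lpSeqNorm p b ≠ ∞ →
      lorentzNorm p (ENNReal.ofReal p) (fun n =>
          (∑' k : ℕ, ENNReal.ofReal (b (n + 1 + k) ^ 2)) ^ (1 / 2 : ℝ) /
            ENNReal.ofReal (((n : ℝ) + 1) ^ (1 / 2 : ℝ))) ≤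
        ENNReal.ofReal C * lpSeqNorm p b) ∧
    ∀ b : ℕ → ℝ, (∀ n, 0 ≤ b n) → Antitone b → ∀ n : ℕ, 1 ≤ n →
      ENNReal.ofReal ((n : ℝ) ^ (1 / 2 : ℝ) * b (2 * n)) ≤
        (∑' k : ℕ, ENNReal.ofReal (b (n + k) ^ 2)) ^ (1 / 2 : ℝ) := by
  constructor
  · -- main bound
    set r : ℝ≥0∞ := (2 : ℝ≥0∞) ^ (p / 2 - 1 : ℝ) with hrdef
    have hr1 : r < 1 :=
      ENNReal.rpow_lt_one_of_one_lt_of_neg (by norm_num) (by linarith)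
    set K : ℝ≥0∞ := (1 - r)⁻¹ with hKdef
    have hK : K ≠ ∞ := by
      rw [hKdef, Ne, ENNReal.inv_eq_top]
      exact (tsub_pos_of_lt hr1).ne'
    set Kp : ℝ≥0∞ := K ^ (1 / p : ℝ) with hKpdef
    have hKp : Kp ≠ ∞ := ENNReal.rpow_ne_top_of_nonneg (by positivity) hK
    refine ⟨Kp.toReal + 1, by positivity, fun b hb hmono _ => ?_⟩
    set B : ℕ → ℝ≥0∞ := fun n => ENNReal.ofReal (b n) with hBdef
    have hBmono : Antitone B := fun i j h => ENNReal.ofReal_le_ofReal (hmono h)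
    have hB2 : ∀ m : ℕ, ENNReal.ofReal (b m ^ 2) = B m ^ 2 := fun m =>
      ENNReal.ofReal_pow (hb m) 2
    have hBp : ∀ m : ℕ, ENNReal.ofReal (b m ^ p) = B m ^ p := fun m =>
      (ENNReal.ofReal_rpow_of_nonneg (hb m) hp0.le).symm
    have hD : ∀ n : ℕ, ENNReal.ofReal (((n : ℝ) + 1) ^ (1 / 2 : ℝ))
        = ((n : ℝ≥0∞) + 1) ^ (1 / 2 : ℝ) := by
      intro n
      have h1 : ENNReal.ofReal ((n : ℝ) + 1) = (n : ℝ≥0∞) + 1 := by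
        rw [ENNReal.ofReal_add (by positivity) zero_le_one, ENNReal.ofReal_natCast,
          ENNReal.ofReal_one]
      rw [← h1, ENNReal.ofReal_rpow_of_nonneg (by positivity) (by norm_num)]
    have hq : (ENNReal.ofReal p) ≠ ∞ := ENNReal.ofReal_ne_top
    rw [lorentzNorm, if_neg hq, ENNReal.toReal_ofReal hp0.le]
    simp only [sub_self, Real.rpow_zero, ENNReal.ofReal_one, one_mul, hB2, hD]
    have hkey := aux_key hp0 hp2.le B hBmono
    rw [← hrdef, ← hKdef] at hkey
    have hmul := ENNReal.rpow_le_rpow hkey (by positivity : (0:ℝ) ≤ 1 / p)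
    rw [ENNReal.mul_rpow_of_nonneg _ _ (by positivity : (0:ℝ) ≤ 1 / p)] at hmul
    refine hmul.trans ?_
    rw [lpSeqNorm]
    simp only [hBp]
    refine mul_le_mul_of_nonneg_right ?_ zero_le
    calc Kp = ENNReal.ofReal Kp.toReal := (ENNReal.ofReal_toReal hKp).symm
      _ ≤ ENNReal.ofReal (Kp.toReal + 1) := ENNReal.ofReal_le_ofReal (by linarith)
  · -- converse
    intro b hb hmono n hn
    have key : (n : ℝ≥0∞) * ENNReal.ofReal (b (2 * n) ^ 2)
        ≤ ∑' k : ℕ, ENNReal.ofReal (b (n + k) ^ 2) := by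
      calc (n : ℝ≥0∞) * ENNReal.ofReal (b (2 * n) ^ 2)
          = ∑ _k ∈ Finset.range n, ENNReal.ofReal (b (2 * n) ^ 2) := by
            simp [nsmul_eq_mul]
        _ ≤ ∑ k ∈ Finset.range n, ENNReal.ofReal (b (n + k) ^ 2) := by
            refine Finset.sum_le_sum fun k hk => ENNReal.ofReal_le_ofReal ?_
            have hk' : k < n := Finset.mem_range.mp hk
            have hbb : b (2 * n) ≤ b (n + k) := hmono (by omega)
            exact pow_le_pow_left₀ (hb _) hbb 2
        _ ≤ ∑' k : ℕ, ENNReal.ofReal (b (n + k) ^ 2) := ENNReal.sum_le_tsum _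
    have h12 := ENNReal.rpow_le_rpow key (by norm_num : (0:ℝ) ≤ 1 / 2)
    refine le_trans (le_of_eq ?_) h12
    rw [ENNReal.mul_rpow_of_nonneg _ _ (by norm_num : (0:ℝ) ≤ 1 / 2),
      ENNReal.ofReal_pow (hb _), ← ENNReal.rpow_natCast (ENNReal.ofReal (b (2 * n))) 2,
      ← ENNReal.rpow_mul, show ((2 : ℕ) : ℝ) * (1 / 2) = 1 by push_cast; ring,
      ENNReal.rpow_one, ← ENNReal.ofReal_natCast n,
      ENNReal.ofReal_rpow_of_nonneg (by positivity) (by norm_num),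
      ← ENNReal.ofReal_mul (by positivity)]
end
end
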